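/- Let α̂ be a random variable with E[(α̂ − α)²] = σ_α². Then E[|α̂ − α|] ≤ σ_α, and consequently in the count-misspecification setting sup_g |R̄(g) − R(g)| ≤ (2B/η̲²)·σ_α and R(ḡ) − R(g*) ≤ (4B/η̲²)·σ_α, where R̄(g) = E_{α̂}[R̃(g; α̂)] and ḡ minimizes R̄ over G. -/

import Mathlib

open MeasureTheory ProbabilityTheory

/-- Variance-form bounds for random count misspecification.
`E|α̂ − α| ≤ σ_α` (Cauchy–Schwarz/Jensen), hence the uniform bias bound
`sup_g |R̄(g) − R(g)| ≤ (2B/η̲²)σ_α` and the excess-risk bound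
`R(ḡ) − R(g*) ≤ (4B/η̲²)σ_α`. -/
theorem ntmp_count_misspecification_variance_form
    {Ω : Type*} [MeasureSpace Ω] [IsProbabilityMeasure (ℙ : Measure Ω)]
    (αhat : Ω → ℝ) (α : ℝ) (hL2 : MemLp (fun ω => αhat ω - α) 2 ℙ)
    (σα : ℝ) (hσα0 : 0 ≤ σα) (hσα : σα ^ 2 = ∫ ω, (αhat ω - α) ^ 2)
    (B ηl : ℝ) (hB : 0 ≤ B) (hηl : 0 < ηl)
    {G : Type*} (R Rbar : G → ℝ)
    -- the uniform expected-bias bound from the count-misspecification theorem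
    (hbias : ∀ g, |Rbar g - R g| ≤ (2 * B / ηl ^ 2) * ∫ ω, |αhat ω - α|)
    (gstar gbar : G)
    (hstar : ∀ g, R gstar ≤ R g)
    (hbar : ∀ g, Rbar gbar ≤ Rbar g) :
    (∫ ω, |αhat ω - α|) ≤ σα ∧
    (∀ g, |Rbar g - R g| ≤ (2 * B / ηl ^ 2) * σα) ∧
    R gbar - R gstar ≤ (4 * B / ηl ^ 2) * σα := by
  have habs : MemLp (fun ω => |αhat ω - α|) (ENNReal.ofReal 2) ℙ := by
    have : (ENNReal.ofReal 2) = (2 : ENNReal) := by norm_num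
    rw [this]
    exact hL2.abs
  have hone : MemLp (fun _ : Ω => (1 : ℝ)) (ENNReal.ofReal 2) ℙ := memLp_const 1
  have hCS := integral_mul_le_Lp_mul_Lq_of_nonneg (Real.holderConjugate_iff.mpr ⟨one_lt_two, by norm_num⟩ : Real.HolderConjugate 2 2)
      (Filter.Eventually.of_forall fun ω => abs_nonneg (αhat ω - α))
      (Filter.Eventually.of_forall fun _ => zero_le_one) habs hone
  have hE : (∫ ω, |αhat ω - α|) ≤ σα := by
    have h1 : ∫ (ω : Ω), |αhat ω - α| * (1 : ℝ) = ∫ ω, |αhat ω - α| := by simp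
    have h2 : ∫ (ω : Ω), |αhat ω - α| ^ (2 : ℝ) = ∫ ω, (αhat ω - α) ^ 2 := by
      refine integral_congr_ae (Filter.Eventually.of_forall fun ω => ?_)
      have : |αhat ω - α| ^ (2 : ℝ) = (αhat ω - α) ^ 2 := by
        rw [show ((2 : ℝ)) = ((2 : ℕ) : ℝ) by norm_num, Real.rpow_natCast, sq_abs]
      exact this
    have h3 : ∫ (_ : Ω), (1 : ℝ) ^ (2 : ℝ) = (1 : ℝ) := by simp
    rw [h1, h2, h3] at hCS
    calc (∫ ω, |αhat ω - α|) ≤ (∫ ω, (αhat ω - α) ^ 2) ^ (1 / (2:ℝ)) * 1 ^ (1 / (2:ℝ)) := hCS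
      _ = (σα ^ 2) ^ (1 / (2:ℝ)) := by rw [← hσα]; simp
      _ = Real.sqrt (σα ^ 2) := by
          rw [Real.sqrt_eq_rpow]
      _ = σα := Real.sqrt_sq hσα0
  have hc : (0 : ℝ) ≤ 2 * B / ηl ^ 2 :=
    div_nonneg (by linarith) (by positivity)
  refine ⟨hE, fun g => (hbias g).trans (by nlinarith [abs_nonneg (αhat), hE]), ?_⟩
  · have h1 := hbias gbar
    have h2 := hbias gstar
    have h3 := hbar gstar
    have hEc : (2 * B / ηl ^ 2) * (∫ ω, |αhat ω - α|) ≤ (2 * B / ηl ^ 2) * σα :=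
      mul_le_mul_of_nonneg_left hE hc
    have ha1 := abs_le.mp h1
    have ha2 := abs_le.mp h2
    have : (4 : ℝ) * B / ηl ^ 2 = 2 * (2 * B / ηl ^ 2) := by ring
    rw [this]
    nlinarith
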